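/- Fix constants a > 0, b > 0, and c > 1. Define f(x) = x · (2^{1/x}·(1 + a·2^{1/x})) / (1 − b·2^{c/x}) on the domain D = { x > 0 : 1 − b·2^{c/x} > 0 }. Then f is convex on D. -/

import Mathlib

open Real Set

private lemma comb_pos {p q x y : ℝ} (hp : 0 ≤ p) (hq : 0 ≤ q) (hpq : p + q = 1)
    (hx : 0 < x) (hy : 0 < y) : 0 < p * x + q * y := by
  rcases hp.eq_or_lt with h | h
  · have hq1 : q = 1 := by linarith
    simp [← h, hq1, hy]
  · exact add_pos_of_pos_of_nonneg (mul_pos h hx) (mul_nonneg hq hy.le)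

private lemma convexOn_rpow_linear (k : ℝ) :
    ConvexOn ℝ Set.univ (fun t : ℝ => (2 : ℝ) ^ (k * t)) := by
  have hE : (fun t : ℝ => (2 : ℝ) ^ (k * t)) = fun t : ℝ => Real.exp (k * Real.log 2 * t) := by
    funext t
    rw [Real.rpow_def_of_pos two_pos]
    ring_nf
  rw [hE]
  refine ⟨convex_univ, fun x _ y _ p q hp hq hpq => ?_⟩
  have h := convexOn_exp.2 (Set.mem_univ (k * Real.log 2 * x))
    (Set.mem_univ (k * Real.log 2 * y)) hp hq hpq
  simp only [smul_eq_mul] at h ⊢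
  calc Real.exp (k * Real.log 2 * (p * x + q * y))
      = Real.exp (p * (k * Real.log 2 * x) + q * (k * Real.log 2 * y)) := by ring_nf
    _ ≤ p * Real.exp (k * Real.log 2 * x) + q * Real.exp (k * Real.log 2 * y) := h

/-- Perspective construction: if `g` is convex on `S`, then `x ↦ x * g (1/x)` is convex
on `{x | 0 < x ∧ 1/x ∈ S}`. -/
private lemma key_eq {p q x y : ℝ} (hx : x ≠ 0) (hy : y ≠ 0) (hpq : p + q = 1) :
    p * x / (p * x + q * y) * (1 / x) + q * y / (p * x + q * y) * (1 / y)
      = 1 / (p * x + q * y) := by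
  rw [mul_one_div, div_div, mul_one_div, div_div,
    mul_div_mul_right _ _ hx, mul_div_mul_right _ _ hy, ← add_div, hpq]

private lemma perspective {S : Set ℝ} {g : ℝ → ℝ} (hg : ConvexOn ℝ S g) :
    ConvexOn ℝ {x : ℝ | 0 < x ∧ 1 / x ∈ S} (fun x => x * g (1 / x)) := by
  constructor
  · intro x hx y hy p q hp hq hpq
    obtain ⟨hx0, hxS⟩ := hx
    obtain ⟨hy0, hyS⟩ := hy
    simp only [smul_eq_mul, Set.mem_setOf_eq]
    have hz0 : 0 < p * x + q * y := comb_pos hp hq hpq hx0 hy0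
    refine ⟨hz0, ?_⟩
    have key : 1 / (p * x + q * y)
        = (p * x / (p * x + q * y)) • (1 / x) + (q * y / (p * x + q * y)) • (1 / y) := by
      simp only [smul_eq_mul]
      exact (key_eq hx0.ne' hy0.ne' hpq).symm
    rw [key]
    exact hg.1 hxS hyS (by positivity) (by positivity) (by field_simp)
  · intro x hx y hy p q hp hq hpq
    obtain ⟨hx0, hxS⟩ := hx
    obtain ⟨hy0, hyS⟩ := hy
    simp only [smul_eq_mul]
    have hz0 : 0 < p * x + q * y := comb_pos hp hq hpq hx0 hy0
    have h := hg.2 hxS hyS (show 0 ≤ p * x / (p * x + q * y) by positivity)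
      (show 0 ≤ q * y / (p * x + q * y) by positivity)
      (show p * x / (p * x + q * y) + q * y / (p * x + q * y) = 1 by field_simp)
    simp only [smul_eq_mul] at h
    have key : p * x / (p * x + q * y) * (1 / x) + q * y / (p * x + q * y) * (1 / y)
        = 1 / (p * x + q * y) := key_eq hx0.ne' hy0.ne' hpq
    rw [key] at h
    have h2 : (p * x + q * y) * g (1 / (p * x + q * y))
        ≤ (p * x + q * y) * (p * x / (p * x + q * y) * g (1 / x)
            + q * y / (p * x + q * y) * g (1 / y)) :=
      mul_le_mul_of_nonneg_left h hz0.le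
    calc (p * x + q * y) * g (1 / (p * x + q * y))
        ≤ (p * x + q * y) * (p * x / (p * x + q * y) * g (1 / x)
            + q * y / (p * x + q * y) * g (1 / y)) := h2
      _ = p * (x * g (1 / x)) + q * (y * g (1 / y)) := by
          have hzne : p * x + q * y ≠ 0 := hz0.ne'
          field_simp

theorem stmt_4 (a b c : ℝ) (ha : 0 < a) (hb : 0 < b) (hc : 1 < c) :
    ConvexOn ℝ {x : ℝ | 0 < x ∧ 0 < 1 - b * (2 : ℝ) ^ (c / x)}
      (fun x : ℝ =>
        x * ((2 : ℝ) ^ (1 / x) * (1 + a * (2 : ℝ) ^ (1 / x))) / (1 - b * (2 : ℝ) ^ (c / x))) := by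
  set S : Set ℝ := {t : ℝ | 0 < t ∧ 0 < 1 - b * (2 : ℝ) ^ (c * t)} with hS
  have hc0 : 0 < c := lt_trans one_pos hc
  -- convexity of the set S
  have hSconv : Convex ℝ S := by
    intro x hx y hy p q hp hq hpq
    obtain ⟨hx0, hx1⟩ := hx
    obtain ⟨hy0, hy1⟩ := hy
    simp only [hS, smul_eq_mul, Set.mem_setOf_eq] at *
    have hz0 : 0 < p * x + q * y := comb_pos hp hq hpq hx0 hy0
    refine ⟨hz0, ?_⟩
    have hle : p * x + q * y ≤ max x y := by
      calc p * x + q * y ≤ p * max x y + q * max x y := by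
            gcongr
            · exact le_max_left x y
            · exact le_max_right x y
        _ = max x y := by rw [← add_mul, hpq, one_mul]
    have hpow : (2 : ℝ) ^ (c * (p * x + q * y)) ≤ (2 : ℝ) ^ (c * max x y) :=
      Real.rpow_le_rpow_of_exponent_le one_le_two (by nlinarith)
    have hmax : 0 < 1 - b * (2 : ℝ) ^ (c * max x y) := by
      rcases max_cases x y with ⟨h, _⟩ | ⟨h, _⟩ <;> rw [h] <;> assumption
    nlinarith [hpow, hb]
  -- numerator convex on S
  have hu : ConvexOn ℝ S (fun t : ℝ => (2 : ℝ) ^ (1 * t) + a * (2 : ℝ) ^ (2 * t)) := by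
    have h1 := (convexOn_rpow_linear 1).subset (Set.subset_univ S) hSconv
    have h2 := ((convexOn_rpow_linear 2).subset (Set.subset_univ S) hSconv).smul ha.le
    convert h1.add h2 using 1
    · rfl
    · funext t
      simp
  have hEu : (fun t : ℝ => (2 : ℝ) ^ t * (1 + a * (2 : ℝ) ^ t))
      = fun t : ℝ => (2 : ℝ) ^ (1 * t) + a * (2 : ℝ) ^ (2 * t) := by
    funext t
    rw [one_mul, two_mul, Real.rpow_add two_pos]
    ring
  have hu' : ConvexOn ℝ S (fun t : ℝ => (2 : ℝ) ^ t * (1 + a * (2 : ℝ) ^ t)) := by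
    rw [hEu]; exact hu
  -- denominator reciprocal convex on S
  have hv : ConvexOn ℝ S (fun t : ℝ => (1 - b * (2 : ℝ) ^ (c * t))⁻¹) := by
    refine ⟨hSconv, ?_⟩
    intro x hx y hy p q hp hq hpq
    obtain ⟨hx0, hA⟩ := hx
    obtain ⟨hy0, hB⟩ := hy
    simp only [smul_eq_mul]
    set A := 1 - b * (2 : ℝ) ^ (c * x) with hAdef
    set B := 1 - b * (2 : ℝ) ^ (c * y) with hBdef
    have hw := (convexOn_rpow_linear c).2 (Set.mem_univ x) (Set.mem_univ y) hp hq hpq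
    simp only [smul_eq_mul] at hw
    have hC : p * A + q * B ≤ 1 - b * (2 : ℝ) ^ (c * (p * x + q * y)) := by
      have := mul_le_mul_of_nonneg_left hw hb.le
      simp only [hAdef, hBdef]
      nlinarith
    have hPAB : 0 < p * A + q * B := comb_pos hp hq hpq hA hB
    have hCpos : 0 < 1 - b * (2 : ℝ) ^ (c * (p * x + q * y)) := lt_of_lt_of_le hPAB hC
    have step1 : (1 - b * (2 : ℝ) ^ (c * (p * x + q * y)))⁻¹ ≤ (p * A + q * B)⁻¹ :=
      inv_anti₀ hPAB hC
    have step2 : (p * A + q * B)⁻¹ ≤ p * A⁻¹ + q * B⁻¹ := by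
      rw [inv_eq_one_div, div_le_iff₀ hPAB]
      have e1 : p * A⁻¹ + q * B⁻¹ = (p * B + q * A) / (A * B) := by
        field_simp
      rw [e1, div_mul_eq_mul_div, le_div_iff₀ (by positivity)]
      have hq' : q = 1 - p := by linarith
      subst hq'
      nlinarith [mul_nonneg (mul_nonneg hp (by linarith : (0:ℝ) ≤ 1 - p)) (sq_nonneg (A - B))]
    exact step1.trans step2
  -- nonnegativity and monotonicity
  have hu0 : ∀ ⦃t⦄, t ∈ S → 0 ≤ (2 : ℝ) ^ t * (1 + a * (2 : ℝ) ^ t) := by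
    intro t _; positivity
  have hv0 : ∀ ⦃t⦄, t ∈ S → 0 ≤ (1 - b * (2 : ℝ) ^ (c * t))⁻¹ := by
    intro t ht; exact (inv_pos.2 ht.2).le
  have humono : MonotoneOn (fun t : ℝ => (2 : ℝ) ^ t * (1 + a * (2 : ℝ) ^ t)) S := by
    intro x _ y _ hxy
    have h2 : (2 : ℝ) ^ x ≤ (2 : ℝ) ^ y := Real.rpow_le_rpow_of_exponent_le one_le_two hxy
    have hx2 : (0 : ℝ) < (2 : ℝ) ^ x := Real.rpow_pos_of_pos two_pos x
    have hy2 : (0 : ℝ) < (2 : ℝ) ^ y := Real.rpow_pos_of_pos two_pos y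
    have h4 : (2 : ℝ) ^ x * (2 : ℝ) ^ x ≤ (2 : ℝ) ^ y * (2 : ℝ) ^ y :=
      mul_le_mul h2 h2 hx2.le hy2.le
    simp only
    nlinarith [mul_le_mul_of_nonneg_left h4 ha.le]
  have hvmono : MonotoneOn (fun t : ℝ => (1 - b * (2 : ℝ) ^ (c * t))⁻¹) S := by
    intro x hx y hy hxy
    have h2 : (2 : ℝ) ^ (c * x) ≤ (2 : ℝ) ^ (c * y) :=
      Real.rpow_le_rpow_of_exponent_le one_le_two (by nlinarith)
    exact inv_anti₀ hy.2 (by nlinarith)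
  have hmv : MonovaryOn (fun t : ℝ => (2 : ℝ) ^ t * (1 + a * (2 : ℝ) ^ t))
      (fun t : ℝ => (1 - b * (2 : ℝ) ^ (c * t))⁻¹) S := by
    intro i hi j hj hij
    rcases le_total i j with h | h
    · exact humono hi hj h
    · exact absurd (hvmono hj hi h) (not_le.2 hij)
  -- product convex on S
  have hg : ConvexOn ℝ S ((fun t : ℝ => (2 : ℝ) ^ t * (1 + a * (2 : ℝ) ^ t))
      * fun t : ℝ => (1 - b * (2 : ℝ) ^ (c * t))⁻¹) :=
    hu'.mul hv hu0 hv0 hmv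
  have hfin := perspective hg
  -- rewrite set and function
  have hset : {x : ℝ | 0 < x ∧ 0 < 1 - b * (2 : ℝ) ^ (c / x)}
      = {x : ℝ | 0 < x ∧ 1 / x ∈ S} := by
    ext x
    simp only [hS, Set.mem_setOf_eq]
    constructor
    · rintro ⟨h1, h2⟩
      exact ⟨h1, one_div_pos.2 h1, by rwa [mul_one_div]⟩
    · rintro ⟨h1, _, h3⟩
      exact ⟨h1, by rwa [mul_one_div] at h3⟩
  have hfun : (fun x : ℝ =>
        x * ((2 : ℝ) ^ (1 / x) * (1 + a * (2 : ℝ) ^ (1 / x))) / (1 - b * (2 : ℝ) ^ (c / x)))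
      = fun x : ℝ =>
        x * (((fun t : ℝ => (2 : ℝ) ^ t * (1 + a * (2 : ℝ) ^ t))
          * fun t : ℝ => (1 - b * (2 : ℝ) ^ (c * t))⁻¹) (1 / x)) := by
    funext x
    simp only [Pi.mul_apply, mul_one_div]
    ring
  rw [hset, hfun]
  exact hfin
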